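/- Let n be an odd positive integer. Then T(4n) = S(n), where T(4n) counts odd m with 1 ≤ m ≤ 4n, gcd(m, 4n) = 1 and gcd((m−1)/2, 4n) = 1, and S(n) = #{ m : 1 ≤ m ≤ n, gcd(m,n) = 1 and gcd(m−1,n) = 1 }. -/

import Mathlib

/-- `T(n) = #{ m odd : 1 ≤ m ≤ n, gcd(m,n) = 1, gcd((m−1)/2, n) = 1 }`. -/
def Tcount (n : ℕ) : ℕ :=
  ((Finset.Icc 1 n).filter
    (fun m => m % 2 = 1 ∧ Nat.gcd m n = 1 ∧ Nat.gcd ((m - 1) / 2) n = 1)).card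

/-- Schemmel's totient function. -/
def schemmel (n : ℕ) : ℕ :=
  ((Finset.Icc 1 n).filter (fun m => Nat.gcd m n = 1 ∧ Nat.gcd (m - 1) n = 1)).card

/-- gcd depends only on the residue. -/
lemma modGcd {a b n : ℕ} (h : a % n = b % n) : Nat.gcd a n = Nat.gcd b n := by
  rw [Nat.gcd_comm a n, Nat.gcd_comm b n, Nat.gcd_rec n a, Nat.gcd_rec n b, h]

lemma crt3 (n k : ℕ) (hn : n % 2 = 1) :
    (k + n * ((3 + 4 * n - k % 4) * n % 4)) % 4 = 3 := by
  have h1 : (3 + 4 * n - k % 4) % 4 = 3 - k % 4 := by omega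
  rw [Nat.add_mod, Nat.mul_mod n, Nat.mul_mod (3 + 4 * n - k % 4), h1,
    Nat.mod_mod_of_dvd _ (dvd_refl 4)]
  have ha : n % 4 = 1 ∨ n % 4 = 3 := by omega
  have hb : k % 4 < 4 := by omega
  set a := n % 4 with hA
  set b := k % 4 with hB
  rcases ha with ha | ha <;> rw [ha] <;> interval_cases b <;> norm_num

lemma coprime_four_of_odd {q : ℕ} (h : q % 2 = 1) : Nat.Coprime q 4 := by
  have h4 : q % 4 = 1 ∨ q % 4 = 3 := by omega
  unfold Nat.Coprime
  rcases h4 with h4 | h4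
  · rw [modGcd (show q % 4 = 1 % 4 by omega)]
    decide
  · rw [modGcd (show q % 4 = 3 % 4 by omega)]
    decide

theorem stmt_15 (n : ℕ) (hn : 0 < n) (hodd : Odd n) : Tcount (4 * n) = schemmel n := by
  have hn2 : n % 2 = 1 := Nat.odd_iff.mp hodd
  have h2n : Nat.Coprime 2 n := Nat.coprime_two_left.mpr hodd
  unfold Tcount schemmel
  apply Finset.card_nbij' (fun m => (m - 1) % n + 1)
      (fun k => k + n * ((3 + 4 * n - k % 4) * n % 4))
  · -- forward map lands in the schemmel set
    intro m hm
    simp only [Finset.mem_coe, Finset.mem_filter, Finset.mem_Icc] at hm ⊢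
    obtain ⟨⟨hm1, hm2⟩, hodd', hg1, hg2⟩ := hm
    have hmn : Nat.Coprime m n := ((Nat.coprime_mul_iff_right).mp hg1).2
    have hq : Nat.Coprime ((m - 1) / 2) n := ((Nat.coprime_mul_iff_right).mp hg2).2
    have hmlt : (m - 1) % n < n := Nat.mod_lt _ hn
    have hcop1 : Nat.Coprime (m - 1) n := by
      have : Nat.Coprime (2 * ((m - 1) / 2)) n := Nat.Coprime.mul h2n hq
      rwa [show 2 * ((m - 1) / 2) = m - 1 by omega] at this
    refine ⟨⟨by omega, by omega⟩, ?_, ?_⟩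
    · rw [modGcd (show ((m - 1) % n + 1) % n = m % n by
        rw [Nat.mod_add_mod]; congr 1; omega)]
      exact hmn
    · rw [show (m - 1) % n + 1 - 1 = (m - 1) % n by omega,
        modGcd (Nat.mod_mod_of_dvd (m - 1) (dvd_refl n))]
      exact hcop1
  · -- backward map lands in the Tcount set
    intro k hk
    simp only [Finset.mem_coe, Finset.mem_filter, Finset.mem_Icc] at hk ⊢
    obtain ⟨⟨hk1, hk2⟩, hg1, hg2⟩ := hk
    set t := (3 + 4 * n - k % 4) * n % 4 with ht
    have ht3 : t < 4 := Nat.mod_lt _ (by norm_num)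
    set M := k + n * t with hM
    have hM4 : M % 4 = 3 := crt3 n k hn2
    have hMn : M % n = k % n := by rw [hM, Nat.add_mul_mod_self_left]
    have hMle : M ≤ 4 * n := by
      have : n * t ≤ n * 3 := Nat.mul_le_mul_left n (by omega)
      omega
    have hcopM : Nat.Coprime M n := by
      unfold Nat.Coprime; rw [modGcd hMn]; exact hg1
    have hq2 : (M - 1) / 2 % 2 = 1 := by omega
    have hMm1 : (M - 1) % n = (k - 1) % n := by
      rw [show M - 1 = (k - 1) + n * t by omega, Nat.add_mul_mod_self_left]
    have hcopM1 : Nat.Coprime (M - 1) n := by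
      unfold Nat.Coprime; rw [modGcd hMm1]; exact hg2
    have hqn : Nat.Coprime ((M - 1) / 2) n := by
      have h' : Nat.Coprime (2 * ((M - 1) / 2)) n := by
        rw [show 2 * ((M - 1) / 2) = M - 1 by omega]; exact hcopM1
      exact (Nat.coprime_mul_iff_left.mp h').2
    refine ⟨⟨by omega, hMle⟩, by omega, ?_, ?_⟩
    · exact Nat.Coprime.mul_right (coprime_four_of_odd (by omega)) hcopM
    · exact Nat.Coprime.mul_right (coprime_four_of_odd hq2) hqn
  · -- left inverse : for m in the Tcount set, j (i m) = m
    intro m hm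
    simp only [Finset.mem_coe, Finset.mem_filter, Finset.mem_Icc] at hm
    obtain ⟨⟨hm1, hm2⟩, hodd', hg1, hg2⟩ := hm
    set k := (m - 1) % n + 1 with hk
    have hklt : (m - 1) % n < n := Nat.mod_lt _ hn
    set t := (3 + 4 * n - k % 4) * n % 4 with ht
    have ht3 : t < 4 := Nat.mod_lt _ (by norm_num)
    set M := k + n * t with hM
    have hM4 : M % 4 = 3 := crt3 n k hn2
    have hMn : M % n = k % n := by rw [hM, Nat.add_mul_mod_self_left]
    have hMle : M ≤ 4 * n := by
      have : n * t ≤ n * 3 := Nat.mul_le_mul_left n (by omega)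
      omega
    have hq2 : Nat.Coprime ((m - 1) / 2) 2 :=
      Nat.Coprime.coprime_dvd_right (by norm_num)
        ((Nat.coprime_mul_iff_right).mp hg2).1
    have hqodd : (m - 1) / 2 % 2 = 1 :=
      Nat.odd_iff.mp (Nat.coprime_two_right.mp hq2)
    have hm4 : m % 4 = 3 := by omega
    have hmn' : m % n = M % n := by
      rw [hMn, hk, Nat.mod_add_mod]
      congr 1
      omega
    have hd4 : (4 : ℤ) ∣ (M : ℤ) - m :=
      Nat.ModEq.dvd (show m % 4 = M % 4 by rw [hm4, hM4])
    have hdn : (n : ℤ) ∣ (M : ℤ) - m := Nat.ModEq.dvd hmn'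
    have hcop : IsCoprime (4 : ℤ) (n : ℤ) := by
      have h4n : Nat.Coprime 4 n := by
        have : Nat.Coprime (2 * 2) n := Nat.Coprime.mul h2n h2n
        simpa using this
      exact_mod_cast Nat.isCoprime_iff_coprime.mpr h4n
    have hdvd : (4 * n : ℤ) ∣ (M : ℤ) - m := hcop.mul_dvd hd4 hdn
    have habs : |(M : ℤ) - m| < 4 * n := by
      have h1 : 1 ≤ M := by omega
      rw [abs_sub_lt_iff]
      constructor <;> push_cast <;> omega
    have hz := Int.eq_zero_of_abs_lt_dvd hdvd (by exact_mod_cast habs)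
    have : (M : ℤ) = m := by omega
    exact_mod_cast this
  · -- right inverse : for k in the schemmel set, i (j k) = k
    intro k hk
    simp only [Finset.mem_coe, Finset.mem_filter, Finset.mem_Icc] at hk
    obtain ⟨⟨hk1, hk2⟩, -, -⟩ := hk
    beta_reduce
    set t := (3 + 4 * n - k % 4) * n % 4 with ht
    rw [show k + n * t - 1 = (k - 1) + n * t by omega, Nat.add_mul_mod_self_left,
      Nat.mod_eq_of_lt (by omega)]
    omega
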